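/- For every integer n ≥ 1 and every x, p_n(x) = (x − 1) · Σ_{k=0}^{n} (−2)^{n−k} · k! · S(n,k) · (x+1)^k, where S(n,k) is the Stirling number of the second kind (so that k!·S(n,k) equals the number of surjective functions from an n-element set onto a k-element set). -/

import Mathlib

open Polynomial Finset

/-- The alternating derivative polynomials for tangent: `p 0 = X`,
`p (n+1) = (X^2 - 1) * (p n)'`. -/
noncomputable def p : ℕ → Polynomial ℝ
  | 0 => X
  | n + 1 => (X ^ 2 - 1) * derivative (p n)

/-- The alternating derivative polynomials for secant: `q 0 = 1`,
`q (n+1) = 2(X^2 - 1) * (q n)' + 2X * q n`. -/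
noncomputable def q : ℕ → Polynomial ℝ
  | 0 => 1
  | n + 1 => 2 * (X ^ 2 - 1) * derivative (q n) + 2 * X * q n

/-- The Stirling number of the second kind `S(n,k)`, defined so that
`k! * S(n,k)` is the number of surjections from `Fin n` onto `Fin k`. -/
noncomputable def stirling2 (n k : ℕ) : ℝ :=
  (Fintype.card {f : Fin n → Fin k // Function.Surjective f} : ℝ) / (k.factorial : ℝ)


noncomputable def Tc (n k : ℕ) : ℕ :=
  Fintype.card {f : Fin n → Fin k // Function.Surjective f}

lemma Tc_succ_zero (n : ℕ) : Tc (n+1) 0 = 0 := by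
  apply Fintype.card_eq_zero_iff.mpr
  exact ⟨fun f => (f.1 0).elim0⟩

lemma Tc_zero_succ (k : ℕ) : Tc 0 (k+1) = 0 := by
  apply Fintype.card_eq_zero_iff.mpr
  exact ⟨fun f => ((f.2 0).choose).elim0⟩

lemma Tc_eq_zero_of_lt {n k : ℕ} (h : n < k) : Tc n k = 0 := by
  apply Fintype.card_eq_zero_iff.mpr
  refine ⟨fun f => absurd (Fintype.card_le_of_surjective f.1 f.2) ?_⟩
  simpa using h

lemma Tc_one_one : Tc 1 1 = 1 := by
  apply Fintype.card_eq_one_iff.mpr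
  refine ⟨⟨id, Function.surjective_id⟩, fun g => ?_⟩
  exact Subtype.ext (funext fun x => Subsingleton.elim _ _)

section Rec
variable {n k : ℕ}

lemma surj_cons_of_surj (i : Fin (k+1)) {g : Fin n → Fin (k+1)} (hg : Function.Surjective g) :
    Function.Surjective (Fin.cons i g) := by
  intro b
  obtain ⟨a, ha⟩ := hg b
  exact ⟨a.succ, by simpa using ha⟩

/-- the equiv splitting off the value at 0 -/
def consEquiv (n k : ℕ) :
    {f : Fin (n+1) → Fin (k+1) // Function.Surjective f} ≃
      Σ i : Fin (k+1), {g : Fin n → Fin (k+1) // Function.Surjective (Fin.cons i g)} where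
  toFun f := ⟨f.1 0, Fin.tail f.1, by rw [Fin.cons_self_tail]; exact f.2⟩
  invFun x := ⟨Fin.cons x.1 x.2.1, x.2.2⟩
  left_inv f := by
    apply Subtype.ext
    exact Fin.cons_self_tail f.1
  right_inv x := by
    obtain ⟨i, g, hg⟩ := x
    simp [Fin.tail_cons]
    rfl


lemma cons_succAbove_surj (i : Fin (k+1)) {h : Fin n → Fin k} (hh : Function.Surjective h) :
    Function.Surjective (Fin.cons i (i.succAbove ∘ h) : Fin (n+1) → Fin (k+1)) := by
  intro b
  rcases eq_or_ne b i with rfl | hb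
  · exact ⟨0, by simp⟩
  · obtain ⟨a, ha⟩ := b.exists_succAbove_eq hb
    obtain ⟨x, hx⟩ := hh a
    exact ⟨x.succ, by simp [Function.comp, hx, ha]⟩

lemma not_surj_succAbove (i : Fin (k+1)) (h : Fin n → Fin k) :
    ¬ Function.Surjective (i.succAbove ∘ h) := by
  intro hs
  obtain ⟨x, hx⟩ := hs i
  exact Fin.succAbove_ne i (h x) hx

/-- surjections missing `i` on the tail correspond to surjections onto `Fin k` -/
noncomputable def missEquiv (i : Fin (k+1)) :
    {h : Fin n → Fin k // Function.Surjective h} ≃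
      {g : Fin n → Fin (k+1) // Function.Surjective (Fin.cons i g) ∧ ¬ Function.Surjective g} := by
  refine Equiv.ofBijective
    (fun h => ⟨i.succAbove ∘ h.1, cons_succAbove_surj i h.2, not_surj_succAbove i h.1⟩) ⟨?_, ?_⟩
  · intro h1 h2 hEq
    apply Subtype.ext
    funext x
    have hx := congrFun (congrArg Subtype.val hEq) x
    exact Fin.succAbove_right_injective (p := i) hx
  · rintro ⟨g, hcons, hg⟩
    have hne : ∀ x, g x ≠ i := by
      intro x hx
      apply hg
      intro b
      obtain ⟨y, hy⟩ := hcons b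
      rcases Fin.eq_zero_or_eq_succ y with rfl | ⟨z, rfl⟩
      · exact ⟨x, by rw [hx]; simpa using hy⟩
      · exact ⟨z, by simpa using hy⟩
    have hex : ∀ x, ∃ a, i.succAbove a = g x := fun x => (g x).exists_succAbove_eq (hne x)
    refine ⟨⟨fun x => (hex x).choose, ?_⟩, ?_⟩
    · intro a
      obtain ⟨y, hy⟩ := hcons (i.succAbove a)
      rcases Fin.eq_zero_or_eq_succ y with rfl | ⟨z, rfl⟩
      · exact absurd (by simpa using hy) (Fin.ne_succAbove i a)
      · refine ⟨z, Fin.succAbove_right_injective (p := i) ?_⟩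
        rw [(hex z).choose_spec]
        simpa using hy
    · apply Subtype.ext
      funext x
      exact (hex x).choose_spec

end Rec

lemma card_cons (n k : ℕ) (i : Fin (k+1)) :
    Fintype.card {g : Fin n → Fin (k+1) // Function.Surjective (Fin.cons i g)} =
      Tc n (k+1) + Tc n k := by
  classical
  set P : (Fin n → Fin (k+1)) → Prop := fun g => Function.Surjective (Fin.cons i g) with hP
  have e1 : {x : {g // P g} // Function.Surjective x.1} ⊕
      {x : {g // P g} // ¬ Function.Surjective x.1} ≃ {g // P g} :=
    Equiv.sumCompl _
  have h0 : Fintype.card {g // P g} =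
      Fintype.card {x : {g // P g} // Function.Surjective x.1} +
      Fintype.card {x : {g // P g} // ¬ Function.Surjective x.1} := by
    rw [← Fintype.card_sum, Fintype.card_congr e1]
  have e2 : {x : {g // P g} // Function.Surjective x.1} ≃
      {g : Fin n → Fin (k+1) // P g ∧ Function.Surjective g} :=
    Equiv.subtypeSubtypeEquivSubtypeInter _ _
  have e3 : {g : Fin n → Fin (k+1) // P g ∧ Function.Surjective g} ≃
      {g : Fin n → Fin (k+1) // Function.Surjective g} :=
    Equiv.subtypeEquivRight fun g => ⟨And.right, fun h => ⟨surj_cons_of_surj i h, h⟩⟩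
  have e4 : {x : {g // P g} // ¬ Function.Surjective x.1} ≃
      {g : Fin n → Fin (k+1) // P g ∧ ¬ Function.Surjective g} :=
    Equiv.subtypeSubtypeEquivSubtypeInter P (fun g => ¬ Function.Surjective g)
  rw [h0, Fintype.card_congr (e2.trans e3), Fintype.card_congr (e4.trans (missEquiv i).symm)]
  rfl

lemma Tc_succ_succ (n k : ℕ) : Tc (n+1) (k+1) = (k+1) * (Tc n (k+1) + Tc n k) := by
  classical
  rw [Tc, Fintype.card_congr (consEquiv n k), Fintype.card_sigma]
  simp only [_root_.card_cons]
  simp [mul_comm]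

noncomputable def aa (n k : ℕ) : ℝ := (-2 : ℝ) ^ (n - k) * (Tc n k : ℝ)

noncomputable def Sp (n : ℕ) : Polynomial ℝ :=
  ∑ k ∈ Finset.range (n + 1), C (aa n k) * (X + 1) ^ k

lemma aa_succ_succ {n k : ℕ} (h : k ≤ n) :
    aa (n+1) (k+1) = (k+1 : ℝ) * aa n k + (-2) * ((k+1 : ℝ) * aa n (k+1)) := by
  have hsub : n + 1 - (k + 1) = n - k := by omega
  rw [aa, hsub, Tc_succ_succ]
  rcases lt_or_eq_of_le h with hlt | rfl
  · have h1 : n - k = (n - (k+1)) + 1 := by omega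
    rw [aa, aa, h1]
    push_cast
    ring
  · have h1 : Tc k (k+1) = 0 := Tc_eq_zero_of_lt (Nat.lt_succ_self k)
    rw [aa, aa, h1]
    push_cast
    ring

lemma aa_zero_right (n : ℕ) : aa (n+1) 0 = 0 := by
  rw [aa, Tc_succ_zero]; simp

lemma aa_top (n : ℕ) : aa n (n+1) = 0 := by
  rw [aa, Tc_eq_zero_of_lt (Nat.lt_succ_self n)]; simp

lemma deriv_pow_aux (k : ℕ) :
    ((X : Polynomial ℝ) ^ 2 - 1) * derivative ((X + 1) ^ k) =
      C (k : ℝ) * ((X + 1) ^ (k + 1) - 2 * (X + 1) ^ k) := by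
  cases k with
  | zero => simp
  | succ m =>
    rw [derivative_pow]
    simp only [derivative_add, derivative_X, derivative_one, add_zero, mul_one,
      Nat.add_sub_cancel]
    push_cast
    ring

lemma Sp_key (n : ℕ) :
    (X + 1) * Sp n + ((X : Polynomial ℝ) ^ 2 - 1) * derivative (Sp n) = Sp (n + 1) := by
  rw [Sp, Sp]
  rw [derivative_sum]
  simp only [derivative_mul, derivative_C, zero_mul, zero_add]
  rw [Finset.mul_sum, Finset.mul_sum]
  have h2 : (C (2:ℝ) : Polynomial ℝ) = 2 := map_ofNat C 2
  have lhs_eq : ∀ k ∈ Finset.range (n+1),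
      (X + 1) * (C (aa n k) * (X + 1) ^ k) = C (aa n k) * (X + 1) ^ (k + 1) := by
    intro k _; ring
  have lhs2_eq : ∀ k ∈ Finset.range (n+1),
      ((X : Polynomial ℝ) ^ 2 - 1) * (C (aa n k) * derivative ((X + 1) ^ k)) =
        C ((k : ℝ) * aa n k) * (X + 1) ^ (k + 1) - C (2 * (k : ℝ) * aa n k) * (X + 1) ^ k := by
    intro k _
    have h1 : ((X : Polynomial ℝ) ^ 2 - 1) * (C (aa n k) * derivative ((X + 1) ^ k)) =
        C (aa n k) * (((X : Polynomial ℝ) ^ 2 - 1) * derivative ((X + 1) ^ k)) := by ring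
    rw [h1, deriv_pow_aux, C_mul, C_mul, C_mul, h2]
    ring
  rw [Finset.sum_congr rfl lhs_eq, Finset.sum_congr rfl lhs2_eq, Finset.sum_sub_distrib]
  -- RHS: peel off the k=0 term
  rw [Finset.sum_range_succ' (fun k => C (aa (n+1) k) * (X + 1) ^ k) (n+1)]
  rw [aa_zero_right]
  simp only [map_zero, zero_mul, add_zero, pow_zero, mul_one]
  have rhs_eq : ∀ k ∈ Finset.range (n+1),
      C (aa (n+1) (k+1)) * (X + 1) ^ (k+1) =
        C (aa n k) * (X + 1) ^ (k+1) + C ((k : ℝ) * aa n k) * (X + 1) ^ (k+1) +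
          C (-2 * ((k+1 : ℝ) * aa n (k+1))) * (X + 1) ^ (k+1) := by
    intro k hk
    rw [aa_succ_succ (Finset.mem_range_succ_iff.mp hk),
      show ((k : ℝ)+1) * aa n k + (-2 : ℝ) * (((k : ℝ)+1) * aa n (k+1)) =
        (aa n k + (k : ℝ) * aa n k) + (-2 * (((k : ℝ)+1) * aa n (k+1))) from by ring,
      C_add, C_add, add_mul, add_mul]
  rw [Finset.sum_congr rfl rhs_eq, Finset.sum_add_distrib, Finset.sum_add_distrib]
  have shift : ∑ k ∈ Finset.range (n+1), C (-2 * ((k+1 : ℝ) * aa n (k+1))) * (X + 1) ^ (k+1) =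
      - ∑ k ∈ Finset.range (n+1), C (2 * (k : ℝ) * aa n k) * (X + 1) ^ k := by
    have hstep : ∑ k ∈ Finset.range (n+1), C (-2 * ((k+1 : ℝ) * aa n (k+1))) * (X + 1) ^ (k+1) =
        ∑ j ∈ Finset.range (n+2), C (-2 * ((j : ℝ) * aa n j)) * (X + 1) ^ j := by
      rw [Finset.sum_range_succ' (fun j => C (-2 * ((j : ℝ) * aa n j)) * (X + 1) ^ j) (n+1)]
      push_cast
      simp
    rw [hstep, Finset.sum_range_succ, aa_top]
    simp only [mul_zero, zero_mul, map_zero, add_zero]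
    rw [← Finset.sum_neg_distrib]
    apply Finset.sum_congr rfl
    intro k _
    rw [show (-2 : ℝ) * ((k : ℝ) * aa n k) = -(2 * (k : ℝ) * aa n k) from by ring, C_neg]
    ring
  rw [shift]
  abel

lemma p_eq (n : ℕ) (hn : 1 ≤ n) : p n = (X - 1) * Sp n := by
  induction n with
  | zero => omega
  | succ m ih =>
    rcases Nat.lt_or_ge m 1 with hm | hm
    · interval_cases m
      have h0 : aa 1 0 = 0 := by rw [aa, Tc_succ_zero]; simp
      have h1 : aa 1 1 = 1 := by rw [aa, Tc_one_one]; simp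
      simp [p, Sp, Finset.sum_range_succ, h0, h1]
      ring
    · rw [p, ih hm, derivative_mul, ← Sp_key m]
      simp only [derivative_sub, derivative_X, derivative_one, sub_zero]
      ring


theorem p_eq_sum_stirling (n : ℕ) (hn : 1 ≤ n) (x : ℝ) :
    (p n).eval x =
      (x - 1) * ∑ k ∈ Finset.range (n + 1),
        (-2 : ℝ) ^ (n - k) * (k.factorial : ℝ) * stirling2 n k * (x + 1) ^ k := by
  rw [p_eq n hn, eval_mul, eval_sub, eval_X, eval_one, Sp, eval_finset_sum]
  congr 1
  apply Finset.sum_congr rfl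
  intro k _
  rw [eval_mul, eval_C, eval_pow, eval_add, eval_X, eval_one, aa, Tc, stirling2]
  have hk : (k.factorial : ℝ) ≠ 0 := Nat.cast_ne_zero.mpr k.factorial_ne_zero
  field_simp
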